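/- Let λ, μ : ℝ → ℝ be continuous nonnegative functions and let k ≥ 1 be an integer. Then for every t ≥ 0, f_k(t; λ, μ) = 1 - exp(-∫_0^t λ(x) dx) · Γ(k, ∫_0^t μ(x) dx) / (k-1)! - (1/(k-1)!) · ∫_0^t exp(-∫_τ^t λ(x) dx) · μ(τ) · (∫_τ^t μ(x) dx)^{k-1} · exp(-∫_τ^t μ(x) dx) dτ. -/

import Mathlib

open MeasureTheory Real Set Filter Topology intervalIntegral

/-- The upper incomplete Gamma function `Γ(k, x) = ∫_x^∞ s^{k-1} e^{-s} ds`. -/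
noncomputable def uGamma (k : ℕ) (x : ℝ) : ℝ :=
  ∫ s in Set.Ioi x, s ^ (k - 1) * Real.exp (-s)

/-- `f_k(t; λ, μ) = (1/(k-1)!) ∫_0^t λ(τ) exp(-∫_τ^t λ) Γ(k, ∫_τ^t μ) dτ`. -/
noncomputable def fk (k : ℕ) (lam mu : ℝ → ℝ) (t : ℝ) : ℝ :=
  (1 / (Nat.factorial (k - 1) : ℝ)) *
    ∫ τ in (0:ℝ)..t,
      lam τ * Real.exp (-∫ x in τ..t, lam x) * uGamma k (∫ x in τ..t, mu x)

lemma gcont (n : ℕ) : Continuous (fun s : ℝ => s ^ n * Real.exp (-s)) := by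
  fun_prop

lemma gint0 (n : ℕ) : IntegrableOn (fun s : ℝ => s ^ n * Real.exp (-s)) (Set.Ioi 0) := by
  have h := Real.GammaIntegral_convergent (s := (n : ℝ) + 1) (by positivity)
  refine h.congr_fun (fun x hx => ?_) measurableSet_Ioi
  rw [add_sub_cancel_right]
  beta_reduce
  rw [Real.rpow_natCast, mul_comm]

lemma gint (n : ℕ) (b : ℝ) : IntegrableOn (fun s : ℝ => s ^ n * Real.exp (-s)) (Set.Ioi b) := by
  rcases le_total 0 b with hb | hb
  · exact (gint0 n).mono_set (Set.Ioi_subset_Ioi hb)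
  · rw [← Set.Ioc_union_Ioi_eq_Ioi hb]
    exact ((gcont n).integrableOn_Ioc).union (gint0 n)

lemma uGamma_zero (k : ℕ) (hk : 1 ≤ k) : uGamma k 0 = (Nat.factorial (k - 1) : ℝ) := by
  have h1 : ((k : ℝ)) = ((k - 1 : ℕ) : ℝ) + 1 := by
    have := Nat.cast_sub hk (R := ℝ); push_cast at this ⊢; linarith
  have h2 : Real.Gamma ((k - 1 : ℕ) + 1) = (Nat.factorial (k - 1) : ℝ) :=
    Real.Gamma_nat_eq_factorial (k - 1)
  have h3 : Real.Gamma (k : ℝ) = ∫ x in Set.Ioi (0:ℝ), Real.exp (-x) * x ^ ((k:ℝ) - 1) :=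
    Real.Gamma_eq_integral (by exact_mod_cast Nat.lt_of_lt_of_le Nat.zero_lt_one hk)
  rw [uGamma]
  have h4 : ∫ x in Set.Ioi (0:ℝ), Real.exp (-x) * x ^ ((k:ℝ) - 1)
      = ∫ s in Set.Ioi (0:ℝ), s ^ (k - 1) * Real.exp (-s) := by
    refine setIntegral_congr_fun measurableSet_Ioi (fun x hx => ?_)
    rw [show (k:ℝ) - 1 = ((k - 1 : ℕ) : ℝ) by rw [h1]; ring, Real.rpow_natCast, mul_comm]
  rw [← h4, ← h3, show ((k:ℝ)) = (((k - 1 : ℕ) : ℝ) + 1) from h1, h2]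

lemma uGamma_eq (k : ℕ) (x : ℝ) :
    uGamma k x = uGamma k 0 - ∫ s in (0:ℝ)..x, s ^ (k - 1) * Real.exp (-s) := by
  rcases le_total x 0 with hx | hx
  · rw [uGamma, uGamma, ← Set.Ioc_union_Ioi_eq_Ioi hx,
      setIntegral_union (Set.Ioc_disjoint_Ioi le_rfl) measurableSet_Ioi
        ((gcont (k-1)).integrableOn_Ioc) (gint (k-1) 0),
      intervalIntegral.integral_symm, intervalIntegral.integral_of_le hx]
    ring
  · rw [uGamma, uGamma, ← Set.Ioc_union_Ioi_eq_Ioi hx,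
      setIntegral_union (Set.Ioc_disjoint_Ioi le_rfl) measurableSet_Ioi
        ((gcont (k-1)).integrableOn_Ioc) (gint (k-1) x),
      intervalIntegral.integral_of_le hx]
    ring

lemma uGamma_hasDerivAt (k : ℕ) (x : ℝ) :
    HasDerivAt (uGamma k) (-(x ^ (k - 1) * Real.exp (-x))) x := by
  have : uGamma k = fun y => uGamma k 0 - ∫ s in (0:ℝ)..y, s ^ (k - 1) * Real.exp (-s) :=
    funext (uGamma_eq k)
  rw [this]
  exact (((gcont (k-1)).integral_hasStrictDerivAt 0 x).hasDerivAt).const_sub _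

/-- the integration-by-parts representation of `f_k(t; λ, μ)`. -/
theorem stmt7 (lam mu : ℝ → ℝ) (hlamc : Continuous lam) (hmuc : Continuous mu)
    (hlam : ∀ x, 0 ≤ lam x) (hmu : ∀ x, 0 ≤ mu x)
    (k : ℕ) (hk : 1 ≤ k) (t : ℝ) (ht : 0 ≤ t) :
    fk k lam mu t =
      1 - Real.exp (-∫ x in (0:ℝ)..t, lam x) * uGamma k (∫ x in (0:ℝ)..t, mu x) /
            (Nat.factorial (k - 1) : ℝ) -
        (1 / (Nat.factorial (k - 1) : ℝ)) *
          ∫ τ in (0:ℝ)..t,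
            Real.exp (-∫ x in τ..t, lam x) * (mu τ * (∫ x in τ..t, mu x) ^ (k - 1) *
              Real.exp (-∫ x in τ..t, mu x)) := by
  have c0 : (Nat.factorial (k - 1) : ℝ) ≠ 0 := Nat.cast_ne_zero.mpr (Nat.factorial_ne_zero _)
  set F : ℝ → ℝ := fun τ => ∫ x in (0:ℝ)..τ, lam x with hF
  set M : ℝ → ℝ := fun τ => ∫ x in (0:ℝ)..τ, mu x with hM
  have hFd : ∀ τ, HasDerivAt F (lam τ) τ :=
    fun τ => (hlamc.integral_hasStrictDerivAt 0 τ).hasDerivAt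
  have hMd : ∀ τ, HasDerivAt M (mu τ) τ :=
    fun τ => (hmuc.integral_hasStrictDerivAt 0 τ).hasDerivAt
  have hFc : Continuous F := continuous_iff_continuousAt.mpr fun τ => (hFd τ).continuousAt
  have hMc : Continuous M := continuous_iff_continuousAt.mpr fun τ => (hMd τ).continuousAt
  have hlamsub : ∀ τ, (∫ x in τ..t, lam x) = F t - F τ := by
    intro τ
    have := intervalIntegral.integral_add_adjacent_intervals
      (hlamc.intervalIntegrable (μ := volume) 0 τ) (hlamc.intervalIntegrable (μ := volume) τ t)
    simp only [hF]
    linarith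
  have hmusub : ∀ τ, (∫ x in τ..t, mu x) = M t - M τ := by
    intro τ
    have := intervalIntegral.integral_add_adjacent_intervals
      (hmuc.intervalIntegrable (μ := volume) 0 τ) (hmuc.intervalIntegrable (μ := volume) τ t)
    simp only [hM]
    linarith
  have hud : ∀ τ, HasDerivAt (fun τ => uGamma k (M t - M τ))
      (mu τ * ((M t - M τ) ^ (k - 1) * Real.exp (-(M t - M τ)))) τ := by
    intro τ
    have inner : HasDerivAt (fun τ => M t - M τ) (-(mu τ)) τ := (hMd τ).const_sub _
    have h := (uGamma_hasDerivAt k (M t - M τ)).comp τ inner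
    refine h.congr_deriv ?_
    ring
  have hvd : ∀ τ, HasDerivAt (fun τ => Real.exp (-(F t - F τ)))
      (lam τ * Real.exp (-(F t - F τ))) τ := by
    intro τ
    have inner : HasDerivAt (fun τ => -(F t - F τ)) (lam τ) τ := by
      have h0 := ((hFd τ).const_sub (F t)).neg
      rw [neg_neg] at h0
      exact h0
    have h := inner.exp
    convert h using 1
    ring
  have hu'int : IntervalIntegrable
      (fun τ => mu τ * ((M t - M τ) ^ (k - 1) * Real.exp (-(M t - M τ)))) volume 0 t := by
    apply Continuous.intervalIntegrable
    fun_prop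
  have hv'int : IntervalIntegrable
      (fun τ => lam τ * Real.exp (-(F t - F τ))) volume 0 t := by
    apply Continuous.intervalIntegrable
    fun_prop
  have key := intervalIntegral.integral_mul_deriv_eq_deriv_mul
    (fun x _ => hud x) (fun x _ => hvd x) hu'int hv'int
  have e1 : (∫ τ in (0:ℝ)..t,
        lam τ * Real.exp (-∫ x in τ..t, lam x) * uGamma k (∫ x in τ..t, mu x)) =
      ∫ τ in (0:ℝ)..t, uGamma k (M t - M τ) * (lam τ * Real.exp (-(F t - F τ))) := by
    apply intervalIntegral.integral_congr
    intro τ _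
    simp only [hlamsub, hmusub]
    ring
  have e2 : (∫ τ in (0:ℝ)..t,
        Real.exp (-∫ x in τ..t, lam x) * (mu τ * (∫ x in τ..t, mu x) ^ (k - 1) *
          Real.exp (-∫ x in τ..t, mu x))) =
      ∫ τ in (0:ℝ)..t,
        (mu τ * ((M t - M τ) ^ (k - 1) * Real.exp (-(M t - M τ)))) *
          Real.exp (-(F t - F τ)) := by
    apply intervalIntegral.integral_congr
    intro τ _
    simp only [hlamsub, hmusub]
    ring
  have hF0 : F 0 = 0 := intervalIntegral.integral_same
  have hM0 : M 0 = 0 := intervalIntegral.integral_same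
  have hFt : (∫ x in (0:ℝ)..t, lam x) = F t := rfl
  have hMt : (∫ x in (0:ℝ)..t, mu x) = M t := rfl
  rw [fk, e1, key, e2, hFt, hMt, hF0, hM0]
  simp only [sub_self, sub_zero, neg_zero, Real.exp_zero, mul_one, uGamma_zero k hk]
  field_simp
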